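/- Let p ≥ 7 be a prime and let (x_1,...,x_k) be a sequence in Z_p with at least three nonzero terms. Then there exist c_1,...,c_k ∈ Q_p such that c_1x_1 + ... + c_kx_k = 0. -/

import Mathlib

def Qp (p : ℕ) : Set (ZMod p) := {x | ∃ u : (ZMod p)ˣ, (u : ZMod p) ^ 2 = x}

def Np (p : ℕ) : Set (ZMod p) := {x | IsUnit x ∧ x ∉ Qp p}

open Pointwise

section aux

variable (p : ℕ) [Fact p.Prime]

noncomputable def Qf : Finset (ZMod p) :=
  Finset.univ.image (fun u : (ZMod p)ˣ => (u : ZMod p) ^ 2)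

lemma Qf_mem_Qp {y : ZMod p} (hy : y ∈ Qf p) : y ∈ Qp p := by
  rcases Finset.mem_image.1 hy with ⟨u, -, hu⟩
  exact ⟨u, hu⟩

lemma Qf_card : p - 1 ≤ 2 * (Qf p).card := by
  have h := Finset.card_le_mul_card_image (f := fun u : (ZMod p)ˣ => (u : ZMod p) ^ 2)
    Finset.univ 2 ?_
  · have hcu : Fintype.card (ZMod p)ˣ = p - 1 := ZMod.card_units p
    rw [Finset.card_univ, hcu] at h
    exact h
  · intro a ha
    rcases Finset.mem_image.1 ha with ⟨v, -, hv⟩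
    have : (Finset.univ.filter fun u : (ZMod p)ˣ => (u : ZMod p) ^ 2 = a) ⊆ {v, -v} := by
      intro u hu
      have hu2 : (u : ZMod p) ^ 2 = (v : ZMod p) ^ 2 := by
        rw [hv]; exact (Finset.mem_filter.1 hu).2
      have := sq_eq_sq_iff_eq_or_eq_neg.1 hu2
      rcases this with h | h
      · exact Finset.mem_insert.2 (Or.inl (Units.ext h))
      · refine Finset.mem_insert.2 (Or.inr ?_)
        simp only [Finset.mem_singleton]
        exact Units.ext (by simpa using h)
    calc (Finset.univ.filter fun u : (ZMod p)ˣ => (u : ZMod p) ^ 2 = a).card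
        ≤ ({v, -v} : Finset (ZMod p)ˣ).card := Finset.card_le_card this
      _ ≤ 2 := Finset.card_insert_le _ _ |>.trans (by simp)

lemma key (hp : 7 ≤ p) (a b c s : ZMod p) (ha : a ≠ 0) (hb : b ≠ 0) (hc : c ≠ 0) :
    ∃ α ∈ Qp p, ∃ β ∈ Qp p, ∃ γ ∈ Qp p, α * a + β * b + γ * c = s := by
  classical
  have hprime : p.Prime := Fact.out
  set Q := Qf p with hQ
  have hQne : Q.Nonempty := ⟨1, Finset.mem_image.2 ⟨1, Finset.mem_univ _, by simp⟩⟩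
  set A : Finset (ZMod p) := Q.image (· * a) with hA
  set B : Finset (ZMod p) := Q.image (· * b) with hB
  set C : Finset (ZMod p) := Q.image (fun γ => s - γ * c) with hC
  have hAcard : A.card = Q.card :=
    Finset.card_image_of_injective _ (fun x y hxy => by
      exact mul_right_cancel₀ ha hxy)
  have hBcard : B.card = Q.card :=
    Finset.card_image_of_injective _ (fun x y hxy => by
      exact mul_right_cancel₀ hb hxy)
  have hCcard : C.card = Q.card :=
    Finset.card_image_of_injective _ (fun x y hxy => by
      have : x * c = y * c := by linear_combination -hxy
      exact mul_right_cancel₀ hc this)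
  have hq2 : p - 1 ≤ 2 * Q.card := Qf_card p
  have hqge : 3 ≤ Q.card := by omega
  have hAne : A.Nonempty := hQne.image _
  have hBne : B.Nonempty := hQne.image _
  have hAB : p - 2 ≤ (A + B).card := by
    have := ZMod.cauchy_davenport hprime hAne hBne
    rw [hAcard, hBcard] at this
    omega
  have hcardZ : Fintype.card (ZMod p) = p := ZMod.card p
  have hunion : (C ∪ (A + B)).card ≤ p := by
    have := Finset.card_le_univ (C ∪ (A + B))
    rwa [hcardZ] at this
  have hinter : (C ∩ (A + B)).Nonempty := by
    rw [← Finset.card_pos]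
    have := Finset.card_union_add_card_inter C (A + B)
    omega
  rcases hinter with ⟨t, ht⟩
  rcases Finset.mem_inter.1 ht with ⟨htC, htAB⟩
  rcases Finset.mem_image.1 htC with ⟨γ, hγ, hγt⟩
  rcases Finset.mem_add.1 htAB with ⟨u, hu, v, hv, huv⟩
  rcases Finset.mem_image.1 hu with ⟨α, hα, hαu⟩
  rcases Finset.mem_image.1 hv with ⟨β, hβ, hβv⟩
  exact ⟨α, Qf_mem_Qp p hα, β, Qf_mem_Qp p hβ, γ, Qf_mem_Qp p hγ, by
    have : α * a + β * b = s - γ * c := by rw [hαu, hβv, huv, ← hγt]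
    linear_combination this⟩

end aux

theorem stmt_2 (p : ℕ) [Fact p.Prime] (hp : 7 ≤ p) (k : ℕ) (x : Fin k → ZMod p)
    (h : 3 ≤ (Finset.univ.filter (fun i => x i ≠ 0)).card) :
    ∃ c : Fin k → ZMod p, (∀ i, c i ∈ Qp p) ∧ ∑ i, c i * x i = 0 := by
  classical
  obtain ⟨i, hi, j, hj, l, hl, hij, hil, hjl⟩ := Finset.two_lt_card.1 h
  have hxi : x i ≠ 0 := (Finset.mem_filter.1 hi).2
  have hxj : x j ≠ 0 := (Finset.mem_filter.1 hj).2
  have hxl : x l ≠ 0 := (Finset.mem_filter.1 hl).2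
  set T : Finset (Fin k) := {i, j, l} with hT
  set s : ZMod p := -(∑ m ∈ Finset.univ \ T, x m) with hs
  obtain ⟨α, hα, β, hβ, γ, hγ, habc⟩ := key p hp (x i) (x j) (x l) s hxi hxj hxl
  refine ⟨fun m => if m = i then α else if m = j then β else if m = l then γ else 1, ?_, ?_⟩
  · intro m
    dsimp only
    split_ifs
    · exact hα
    · exact hβ
    · exact hγ
    · exact ⟨1, by simp⟩
  · have hsplit : ∑ m, (if m = i then α else if m = j then β else if m = l then γ else 1) * x m
        = ∑ m ∈ T, (if m = i then α else if m = j then β else if m = l then γ else 1) * x m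
        + ∑ m ∈ Finset.univ \ T, (if m = i then α else if m = j then β else if m = l then γ else 1) * x m := by
      rw [← Finset.sum_sdiff (Finset.subset_univ T), add_comm]
    rw [hsplit]
    have hTsum : ∑ m ∈ T, (if m = i then α else if m = j then β else if m = l then γ else 1) * x m
        = α * x i + β * x j + γ * x l := by
      rw [hT, Finset.sum_insert (by simp [hij, hil]),
        Finset.sum_insert (by simp [hjl]), Finset.sum_singleton]
      simp only [if_pos rfl, if_neg hij.symm, if_neg hil.symm, if_neg hjl.symm, if_true]
      ring
    have hrest : ∑ m ∈ Finset.univ \ T, (if m = i then α else if m = j then β else if m = l then γ else 1) * x m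
        = ∑ m ∈ Finset.univ \ T, x m := by
      refine Finset.sum_congr rfl fun m hm => ?_
      have := (Finset.mem_sdiff.1 hm).2
      simp only [hT, Finset.mem_insert, Finset.mem_singleton, not_or] at this
      simp [this.1, this.2.1, this.2.2]
    rw [hTsum, hrest, habc, hs]
    ring
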